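/- Every subgroup of a finite group G that attains the maximum Chermak–Delgado measure is subnormal in G. -/

import Mathlib

/-- The Chermak–Delgado measure of a subgroup. -/
noncomputable def cdMeasure {G : Type*} [Group G] (H : Subgroup G) : ℕ :=
  Nat.card H * Nat.card (Subgroup.centralizer (H : Set G))

/-- A subgroup `H` of `G` is subnormal if there is a chain
`H = K₀ ◁ K₁ ◁ ⋯ ◁ Kₙ = G` with each term normal in the next. -/
def IsSubnormal {G : Type*} [Group G] (H : Subgroup G) : Prop :=
  ∃ (n : ℕ) (c : Fin (n + 1) → Subgroup G),
    c 0 = H ∧ c (Fin.last n) = ⊤ ∧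
    ∀ i : Fin n, (c i.castSucc ≤ c i.succ) ∧
      ((c i.castSucc).subgroupOf (c i.succ)).Normal

namespace CDAux

open Subgroup
open scoped Pointwise

variable {G : Type*} [Group G]

lemma card_eq_relIndex_mul_card [Finite G] {A B : Subgroup G} (h : A ≤ B) :
    Nat.card B = A.relIndex B * Nat.card A := by
  have h2 : Nat.card (A.subgroupOf B) = Nat.card A :=
    Nat.card_congr (Subgroup.subgroupOfEquivOfLe h).toEquiv
  rw [Subgroup.relIndex, ← h2, mul_comm]
  exact (Subgroup.card_mul_index _).symm

lemma card_mul_card_le_sup_inf [Finite G] (A B : Subgroup G) :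
    Nat.card A * Nat.card B ≤ Nat.card ↥(A ⊔ B) * Nat.card ↥(A ⊓ B) := by
  have hB : Nat.card B = A.relIndex B * Nat.card ↥(A ⊓ B) := by
    rw [← Subgroup.inf_relIndex_right A B]
    exact card_eq_relIndex_mul_card inf_le_right
  have hS : Nat.card ↥(A ⊔ B) = A.relIndex (A ⊔ B) * Nat.card A :=
    card_eq_relIndex_mul_card le_sup_left
  have hne : A.relIndex (A ⊔ B) ≠ 0 := Subgroup.index_ne_zero_of_finite
  have hle : A.relIndex B ≤ A.relIndex (A ⊔ B) :=
    Subgroup.relIndex_le_of_le_right le_sup_right hne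
  calc Nat.card A * Nat.card B
      = A.relIndex B * (Nat.card A * Nat.card ↥(A ⊓ B)) := by rw [hB]; ring
    _ ≤ A.relIndex (A ⊔ B) * (Nat.card A * Nat.card ↥(A ⊓ B)) :=
        Nat.mul_le_mul_right _ hle
    _ = Nat.card ↥(A ⊔ B) * Nat.card ↥(A ⊓ B) := by rw [hS]; ring

lemma le_centralizer_centralizer' (H : Subgroup G) :
    H ≤ centralizer ((centralizer (H : Set G) : Subgroup G) : Set G) :=
  Subgroup.le_centralizer_iff.mpr le_rfl

lemma centralizer_le_normalizer (H : Subgroup G) :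
    centralizer (H : Set G) ≤ normalizer (H : Set G) := by
  intro g hg
  rw [Subgroup.mem_centralizer_iff] at hg
  rw [Subgroup.mem_normalizer_iff]
  intro h
  constructor
  · intro hh
    have : h * g = g * h := hg h hh
    have : g * h * g⁻¹ = h := by
      rw [← this]; group
    rwa [this]
  · intro hh
    have : (g * h * g⁻¹) * g = g * (g * h * g⁻¹) := hg _ hh
    have h2 : g * h * g⁻¹ = h := by
      have e1 : (g * h * g⁻¹) * g = g * h := by group
      rw [e1] at this
      exact (mul_left_cancel this).symm
    rwa [← h2]

lemma centralizer_inf_le_sup (A B : Subgroup G) :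
    centralizer (A : Set G) ⊓ centralizer (B : Set G) ≤ centralizer ((A ⊔ B : Subgroup G) : Set G) := by
  rw [Subgroup.le_centralizer_iff]
  refine sup_le ?_ ?_
  · exact (le_centralizer_centralizer' A).trans
      (Subgroup.centralizer_le (SetLike.coe_subset_coe.mpr inf_le_left))
  · exact (le_centralizer_centralizer' B).trans
      (Subgroup.centralizer_le (SetLike.coe_subset_coe.mpr inf_le_right))

lemma centralizer_sup_le_inf (A B : Subgroup G) :
    centralizer (A : Set G) ⊔ centralizer (B : Set G) ≤ centralizer ((A ⊓ B : Subgroup G) : Set G) :=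
  sup_le (Subgroup.centralizer_le (SetLike.coe_subset_coe.mpr inf_le_left))
    (Subgroup.centralizer_le (SetLike.coe_subset_coe.mpr inf_le_right))

lemma cdMeasure_pos [Finite G] (H : Subgroup G) : 0 < cdMeasure H :=
  Nat.mul_pos Nat.card_pos Nat.card_pos

lemma cdMeasure_le_cdMeasure_centralizer [Finite G] (H : Subgroup G) :
    cdMeasure H ≤ cdMeasure (centralizer (H : Set G)) := by
  unfold cdMeasure
  rw [mul_comm]
  exact Nat.mul_le_mul_left _ (Subgroup.card_le_of_le (le_centralizer_centralizer' H))

/-- If `A` and `B` both attain the maximal measure, so does `A ⊔ B`, and moreover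
the cardinality product formula degenerates to an equality. -/
lemma sup_cd [Finite G] {H A B : Subgroup G}
    (hmax : ∀ K : Subgroup G, cdMeasure K ≤ cdMeasure H)
    (hA : cdMeasure A = cdMeasure H) (hB : cdMeasure B = cdMeasure H) :
    cdMeasure (A ⊔ B) = cdMeasure H ∧
      Nat.card ↥(A ⊔ B) * Nat.card ↥(A ⊓ B) = Nat.card A * Nat.card B := by
  classical
  set m := cdMeasure H with hm
  set CA := centralizer (A : Set G)
  set CB := centralizer (B : Set G)
  set x1 := Nat.card A * Nat.card B with hx1
  set X := Nat.card ↥(A ⊔ B) * Nat.card ↥(A ⊓ B) with hX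
  set y1 := Nat.card CA * Nat.card CB with hy1
  set Y := Nat.card (centralizer ((A ⊔ B : Subgroup G) : Set G)) *
      Nat.card (centralizer ((A ⊓ B : Subgroup G) : Set G)) with hY
  have hx1X : x1 ≤ X := card_mul_card_le_sup_inf A B
  have hy1Y : y1 ≤ Y := by
    have h1 : y1 ≤ Nat.card ↥(CA ⊔ CB) * Nat.card ↥(CA ⊓ CB) :=
      card_mul_card_le_sup_inf CA CB
    have h2 : Nat.card ↥(CA ⊔ CB) ≤ Nat.card (centralizer ((A ⊓ B : Subgroup G) : Set G)) :=
      Subgroup.card_le_of_le (centralizer_sup_le_inf A B)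
    have h3 : Nat.card ↥(CA ⊓ CB) ≤ Nat.card (centralizer ((A ⊔ B : Subgroup G) : Set G)) :=
      Subgroup.card_le_of_le (centralizer_inf_le_sup A B)
    calc y1 ≤ Nat.card ↥(CA ⊔ CB) * Nat.card ↥(CA ⊓ CB) := h1
      _ ≤ Nat.card (centralizer ((A ⊓ B : Subgroup G) : Set G)) *
          Nat.card (centralizer ((A ⊔ B : Subgroup G) : Set G)) := Nat.mul_le_mul h2 h3
      _ = Y := by rw [hY]; ring
  have hXY : X * Y = cdMeasure (A ⊔ B) * cdMeasure (A ⊓ B) := by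
    unfold cdMeasure; rw [hX, hY]; ring
  have hx1y1 : x1 * y1 = m * m := by
    have : cdMeasure A * cdMeasure B = m * m := by rw [hA, hB]
    unfold cdMeasure at this; rw [hx1, hy1]
    calc Nat.card A * Nat.card B * (Nat.card CA * Nat.card CB)
        = Nat.card A * Nat.card CA * (Nat.card B * Nat.card CB) := by ring
      _ = m * m := this
  have hXYle : X * Y ≤ m * m := by
    rw [hXY]
    exact Nat.mul_le_mul (hmax _) (hmax _)
  have hx1pos : 0 < x1 := Nat.mul_pos Nat.card_pos Nat.card_pos
  have hy1pos : 0 < y1 := Nat.mul_pos Nat.card_pos Nat.card_pos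
  have hup : X * Y ≤ x1 * y1 := by rw [hx1y1]; exact hXYle
  have hdown : x1 * y1 ≤ X * Y := Nat.mul_le_mul hx1X hy1Y
  have heq1 : X * Y = x1 * y1 := le_antisymm hup hdown
  have heq2 : x1 * y1 = X * y1 := le_antisymm (Nat.mul_le_mul_right _ hx1X)
    (by calc X * y1 ≤ X * Y := Nat.mul_le_mul_left _ hy1Y
          _ = x1 * y1 := heq1)
  have hXeq : X = x1 := Nat.eq_of_mul_eq_mul_right hy1pos heq2.symm
  have hXpos : 0 < X := lt_of_lt_of_le hx1pos hx1X
  have heq3 : X * Y = X * y1 := by rw [heq1, heq2]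
  have hYeq : Y = y1 := Nat.eq_of_mul_eq_mul_left hXpos heq3
  have hprod : cdMeasure (A ⊔ B) * cdMeasure (A ⊓ B) = m * m := by
    rw [← hXY, hXeq, hYeq, hx1y1]
  have hsup : cdMeasure (A ⊔ B) = m := by
    have h1 := hmax (A ⊔ B)
    have h2 := hmax (A ⊓ B)
    have hmpos : 0 < m := cdMeasure_pos H
    have hq : cdMeasure (A ⊓ B) = m := by
      have hq1 : m * m ≤ m * cdMeasure (A ⊓ B) := by
        calc m * m = cdMeasure (A ⊔ B) * cdMeasure (A ⊓ B) := hprod.symm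
          _ ≤ m * cdMeasure (A ⊓ B) := Nat.mul_le_mul_right _ h1
      exact le_antisymm h2 (Nat.le_of_mul_le_mul_left hq1 hmpos)
    rw [hq] at hprod
    exact Nat.eq_of_mul_eq_mul_right hmpos hprod
  exact ⟨hsup, hXeq ▸ rfl⟩

lemma card_set_mul_mul_card_inf [Finite G] (A B : Subgroup G) :
    Nat.card ((A : Set G) * (B : Set G)) * Nat.card ↥(A ⊓ B) = Nat.card A * Nat.card B := by
  classical
  set S := (A : Set G) * (B : Set G) with hS
  have hdec : ∀ s : S, ∃ a : A, ∃ b : B, (a : G) * (b : G) = (s : G) := by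
    rintro ⟨s, hs⟩
    rw [hS, Set.mem_mul] at hs
    obtain ⟨a, ha, b, hb, h⟩ := hs
    exact ⟨⟨a, ha⟩, ⟨b, hb⟩, h⟩
  choose f1 f2 hf using hdec
  let φ : S × ↥(A ⊓ B) → A × B := fun p =>
    (⟨(f1 p.1 : G) * (p.2 : G), mul_mem (f1 p.1).2 (Subgroup.mem_inf.mp p.2.2).1⟩,
     ⟨(p.2 : G)⁻¹ * (f2 p.1 : G), mul_mem (inv_mem (Subgroup.mem_inf.mp p.2.2).2) (f2 p.1).2⟩)
  have hinj : Function.Injective φ := by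
    rintro ⟨s, d⟩ ⟨s', d'⟩ h
    have h1 : (f1 s : G) * d = (f1 s' : G) * d' := congrArg (fun x => (x.1 : G)) h
    have h2 : (d : G)⁻¹ * (f2 s : G) = (d' : G)⁻¹ * (f2 s' : G) :=
      congrArg (fun x => (x.2 : G)) h
    have hss : (s : G) = (s' : G) := by
      calc (s : G) = ((f1 s : G) * d) * ((d : G)⁻¹ * (f2 s : G)) := by
            rw [← hf s]; group
        _ = ((f1 s' : G) * d') * ((d' : G)⁻¹ * (f2 s' : G)) := by rw [h1, h2]
        _ = (s' : G) := by rw [← hf s']; group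
    have hss' : s = s' := Subtype.ext hss
    subst hss'
    have hdd : (d : G) = (d' : G) := by
      have := h1
      exact mul_left_cancel this
    exact Prod.ext rfl (Subtype.ext hdd)
  have hsurj : Function.Surjective φ := by
    rintro ⟨x, y⟩
    have hsmem : (x : G) * (y : G) ∈ S := Set.mul_mem_mul x.2 y.2
    set s : S := ⟨(x : G) * (y : G), hsmem⟩ with hs
    have h : (f1 s : G) * (f2 s : G) = (x : G) * (y : G) := hf s
    have hkey : (f1 s : G)⁻¹ * (x : G) = (f2 s : G) * (y : G)⁻¹ := by
      refine mul_left_cancel (a := (f1 s : G)) ?_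
      calc (f1 s : G) * ((f1 s : G)⁻¹ * (x : G)) = (x : G) := by group
        _ = ((x : G) * (y : G)) * (y : G)⁻¹ := by group
        _ = ((f1 s : G) * (f2 s : G)) * (y : G)⁻¹ := by rw [h]
        _ = (f1 s : G) * ((f2 s : G) * (y : G)⁻¹) := by group
    have hdmem : (f1 s : G)⁻¹ * (x : G) ∈ A ⊓ B := by
      rw [Subgroup.mem_inf]
      refine ⟨mul_mem (inv_mem (f1 s).2) x.2, ?_⟩
      rw [hkey]
      exact mul_mem (f2 s).2 (inv_mem y.2)
    refine ⟨⟨s, ⟨(f1 s : G)⁻¹ * (x : G), hdmem⟩⟩, ?_⟩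
    refine Prod.ext (Subtype.ext ?_) (Subtype.ext ?_)
    · show (f1 s : G) * ((f1 s : G)⁻¹ * (x : G)) = (x : G)
      group
    · show ((f1 s : G)⁻¹ * (x : G))⁻¹ * (f2 s : G) = (y : G)
      rw [mul_inv_rev, inv_inv, mul_assoc, h]
      group
  have hcard := Nat.card_congr (Equiv.ofBijective φ ⟨hinj, hsurj⟩)
  rw [Nat.card_prod, Nat.card_prod] at hcard
  exact hcard

lemma set_mul_eq_sup [Finite G] (A B : Subgroup G)
    (h : Nat.card ↥(A ⊔ B) * Nat.card ↥(A ⊓ B) = Nat.card A * Nat.card B) :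
    (A : Set G) * (B : Set G) = ((A ⊔ B : Subgroup G) : Set G) := by
  have hsub : (A : Set G) * (B : Set G) ⊆ ((A ⊔ B : Subgroup G) : Set G) := by
    rintro x hx
    rw [Set.mem_mul] at hx
    obtain ⟨a, ha, b, hb, rfl⟩ := hx
    exact Subgroup.mul_mem_sup ha hb
  have hc := card_set_mul_mul_card_inf A B
  rw [← h] at hc
  have hcard : Nat.card ((A : Set G) * (B : Set G)) = Nat.card ↥(A ⊔ B) :=
    Nat.eq_of_mul_eq_mul_right Nat.card_pos hc
  refine Set.eq_of_subset_of_ncard_le hsub ?_ (Set.toFinite _)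
  rw [← Nat.card_coe_set_eq, ← Nat.card_coe_set_eq, hcard, SetLike.coe_sort_coe]

lemma exists_mul_of_sup_card [Finite G] {A B : Subgroup G}
    (h : Nat.card ↥(A ⊔ B) * Nat.card ↥(A ⊓ B) = Nat.card A * Nat.card B)
    {x : G} (hx : x ∈ A ⊔ B) : ∃ a ∈ A, ∃ b ∈ B, a * b = x := by
  have hset := set_mul_eq_sup A B h
  have hx' : x ∈ (A : Set G) * (B : Set G) := by rw [hset]; exact hx
  rw [Set.mem_mul] at hx'
  obtain ⟨a, ha, b, hb, hab⟩ := hx'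
  exact ⟨a, ha, b, hb, hab⟩

lemma centralizer_map_equiv (e : G ≃* G) (H : Subgroup G) :
    centralizer ((H.map e.toMonoidHom : Subgroup G) : Set G)
      = (centralizer (H : Set G)).map e.toMonoidHom := by
  ext x
  simp only [Subgroup.mem_map, SetLike.mem_coe]
  constructor
  · intro hx
    rw [Subgroup.mem_centralizer_iff] at hx
    refine ⟨e.symm x, ?_, by simp⟩
    rw [Subgroup.mem_centralizer_iff]
    intro h hh
    have h1 : e h * x = x * e h := by
      refine hx (e h) ?_
      simp only [SetLike.mem_coe, Subgroup.mem_map]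
      exact ⟨h, hh, rfl⟩
    apply e.injective
    simp only [map_mul, MulEquiv.apply_symm_apply]
    exact h1
  · rintro ⟨y, hy, rfl⟩
    rw [Subgroup.mem_centralizer_iff] at hy ⊢
    intro z hz
    simp only [SetLike.mem_coe, Subgroup.mem_map] at hz
    obtain ⟨h, hh, rfl⟩ := hz
    show e.toMonoidHom h * e.toMonoidHom y = e.toMonoidHom y * e.toMonoidHom h
    rw [← map_mul, ← map_mul, hy h (by exact hh)]

lemma cdMeasure_map_equiv (e : G ≃* G) (H : Subgroup G) :
    cdMeasure (H.map e.toMonoidHom) = cdMeasure H := by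
  unfold cdMeasure
  rw [centralizer_map_equiv]
  have h1 : Nat.card (H.map e.toMonoidHom) = Nat.card H :=
    (Nat.card_congr (Subgroup.equivMapOfInjective H e.toMonoidHom
      (by simpa using e.injective)).toEquiv).symm
  have h2 : Nat.card ((centralizer (H : Set G)).map e.toMonoidHom)
      = Nat.card (centralizer (H : Set G)) :=
    (Nat.card_congr (Subgroup.equivMapOfInjective _ e.toMonoidHom
      (by simpa using e.injective)).toEquiv).symm
  rw [h1, h2]

lemma map_subtype_centralizer (K : Subgroup G) (L : Subgroup ↥K) :
    (centralizer (L : Set ↥K)).map K.subtype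
      = centralizer ((L.map K.subtype : Subgroup G) : Set G) ⊓ K := by
  ext x
  simp only [Subgroup.mem_map, Subgroup.mem_inf]
  constructor
  · rintro ⟨y, hy, rfl⟩
    rw [Subgroup.mem_centralizer_iff] at hy
    refine ⟨?_, y.2⟩
    rw [Subgroup.mem_centralizer_iff]
    intro z hz
    simp only [SetLike.mem_coe, Subgroup.mem_map] at hz
    obtain ⟨l, hl, rfl⟩ := hz
    have := hy l hl
    exact congrArg (Subgroup.subtype K) this
  · rintro ⟨hx, hxK⟩
    rw [Subgroup.mem_centralizer_iff] at hx
    refine ⟨⟨x, hxK⟩, ?_, rfl⟩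
    rw [Subgroup.mem_centralizer_iff]
    intro l hl
    have : (l : G) * x = x * (l : G) := by
      refine hx (l : G) ?_
      simp only [SetLike.mem_coe, Subgroup.mem_map]
      exact ⟨l, hl, rfl⟩
    exact Subtype.ext this

lemma card_lt_of_lt [Finite G] {A B : Subgroup G} (h : A < B) :
    Nat.card A < Nat.card B :=
  lt_of_le_of_ne (Subgroup.card_le_of_le h.le)
    (fun hEq => h.ne (Subgroup.eq_of_le_of_card_ge h.le hEq.ge))

lemma cdMeasure_subgroup_eq [Finite G] (K : Subgroup G) (L : Subgroup ↥K) :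
    cdMeasure L = Nat.card (L.map K.subtype) *
      Nat.card ↥(centralizer ((L.map K.subtype : Subgroup G) : Set G) ⊓ K) := by
  unfold cdMeasure
  have h1 : Nat.card L = Nat.card (L.map K.subtype) :=
    Nat.card_congr (Subgroup.equivMapOfInjective L K.subtype K.subtype_injective).toEquiv
  have h2 : Nat.card (centralizer (L : Set ↥K))
      = Nat.card ↥(centralizer ((L.map K.subtype : Subgroup G) : Set G) ⊓ K) := by
    rw [← map_subtype_centralizer]
    exact Nat.card_congr (Subgroup.equivMapOfInjective _ K.subtype K.subtype_injective).toEquiv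
  rw [h1, h2]

lemma hmax_restrict [Finite G] {H K : Subgroup G}
    (hmax : ∀ L : Subgroup G, cdMeasure L ≤ cdMeasure H)
    (hHK : H ≤ K) (hC : centralizer (H : Set G) ≤ K) :
    ∀ L : Subgroup ↥K, cdMeasure L ≤ cdMeasure (H.subgroupOf K) := by
  intro L
  have hL : cdMeasure L ≤ cdMeasure (L.map K.subtype) := by
    rw [cdMeasure_subgroup_eq K L]
    unfold cdMeasure
    exact Nat.mul_le_mul_left _ (Subgroup.card_le_of_le inf_le_left)
  have hHeq : cdMeasure (H.subgroupOf K) = cdMeasure H := by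
    rw [cdMeasure_subgroup_eq K (H.subgroupOf K), Subgroup.subgroupOf_map_subtype,
      inf_of_le_left hHK]
    unfold cdMeasure
    congr 1
    rw [inf_of_le_left hC]
  rw [hHeq]
  exact hL.trans (hmax _)

/-- An auxiliary inductive description of subnormal chains. -/
def cdChain {G : Type*} [Group G] : ℕ → Subgroup G → Prop
  | 0, H => H = ⊤
  | (n+1), H => ∃ K : Subgroup G, H ≤ K ∧ (H.subgroupOf K).Normal ∧ cdChain n K

lemma normal_map_transfer {K H : Subgroup G} {L : Subgroup ↥K}
    (hnorm : ((H.subgroupOf K).subgroupOf L).Normal) :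
    (H.subgroupOf (L.map K.subtype)).Normal := by
  constructor
  intro n hn g
  rw [Subgroup.mem_subgroupOf] at hn ⊢
  obtain ⟨nk, hnkL, hnk⟩ := Subgroup.mem_map.mp n.2
  obtain ⟨gk, hgkL, hgk⟩ := Subgroup.mem_map.mp g.2
  have hnmem : (⟨nk, hnkL⟩ : ↥L) ∈ (H.subgroupOf K).subgroupOf L := by
    rw [Subgroup.mem_subgroupOf, Subgroup.mem_subgroupOf]
    show (nk : G) ∈ H
    rw [show (nk : G) = ((n : G) : G) from hnk]
    exact hn
  have hconj := hnorm.conj_mem _ hnmem ⟨gk, hgkL⟩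
  rw [Subgroup.mem_subgroupOf, Subgroup.mem_subgroupOf] at hconj
  have : ((((⟨gk, hgkL⟩ * ⟨nk, hnkL⟩ * (⟨gk, hgkL⟩ : ↥L)⁻¹ : ↥L) : ↥K)) : G)
      = (g : G) * (n : G) * (g : G)⁻¹ := by
    push_cast
    rw [show ((nk : G)) = (n : G) from hnk, show ((gk : G)) = (g : G) from hgk]
  rw [this] at hconj
  exact hconj

lemma cdChain_normal (H : Subgroup G) (hnorm : H.Normal) : cdChain 1 H := by
  refine ⟨⊤, le_top, ?_, rfl⟩
  rw [Subgroup.normal_subgroupOf_iff le_top]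
  intro h k hh _
  exact hnorm.conj_mem h hh k

lemma cdChain_transfer : ∀ (n : ℕ) (K H : Subgroup G), H ≤ K →
    cdChain n (H.subgroupOf K) → (∃ m, cdChain m K) → ∃ m, cdChain m H := by
  intro n
  induction n with
  | zero =>
    intro K H hHK h hK
    have h1 : K ≤ H := Subgroup.subgroupOf_eq_top.mp h
    have hEq : H = K := le_antisymm hHK h1
    rw [hEq]; exact hK
  | succ n ih =>
    intro K H hHK h hK
    obtain ⟨L, hle, hnorm, hc⟩ := h
    set L' := L.map K.subtype with hL'
    have hL'K : L' ≤ K := by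
      rintro x ⟨y, -, rfl⟩
      exact y.2
    have hHL' : H ≤ L' := by
      have hmono := Subgroup.map_mono (f := K.subtype) hle
      rwa [Subgroup.subgroupOf_map_subtype, inf_of_le_left hHK] at hmono
    have hLL' : L'.subgroupOf K = L := by
      rw [hL', ← Subgroup.comap_subtype]
      exact Subgroup.comap_map_eq_self_of_injective K.subtype_injective L
    have hrec : cdChain n (L'.subgroupOf K) := by rw [hLL']; exact hc
    obtain ⟨m, hm⟩ := ih K L' hL'K hrec hK
    exact ⟨m + 1, L', hHL', normal_map_transfer hnorm, hm⟩

end CDAux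


namespace CDAux

variable {G : Type*} [Group G]

lemma isSubnormal_of_cdChain : ∀ {n : ℕ} {H : Subgroup G}, cdChain n H → IsSubnormal H := by
  intro n
  induction n with
  | zero =>
    intro H h
    exact ⟨0, fun _ => ⊤, by rw [h], rfl, fun i => i.elim0⟩
  | succ n ih =>
    intro H h
    obtain ⟨K, hle, hnorm, hc⟩ := h
    obtain ⟨m, c, hc0, hclast, hadj⟩ := ih hc
    refine ⟨m + 1, Fin.cases H c, by simp, ?_, ?_⟩
    · have hlast : Fin.last (m + 1) = (Fin.last m).succ := rfl
      rw [hlast]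
      simp only [Fin.cases_succ]
      exact hclast
    · intro i
      induction i using Fin.cases with
      | zero =>
        simp only [Fin.castSucc_zero, Fin.cases_zero, Fin.cases_succ]
        show H ≤ c 0 ∧ (H.subgroupOf (c 0)).Normal
        rw [hc0]
        exact ⟨hle, hnorm⟩
      | succ j =>
        simp only [Fin.cases_succ]
        exact hadj j

end CDAux

namespace CDAux

open Subgroup

universe u

theorem cd_main : ∀ (N : ℕ) (G : Type u) [Group G] [Finite G],
    Nat.card G ≤ N → ∀ (M : ℕ) (H : Subgroup G), Nat.card G - Nat.card H ≤ M →
    (∀ K : Subgroup G, cdMeasure K ≤ cdMeasure H) → ∃ n, cdChain n H := by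
  intro N
  induction N using Nat.strong_induction_on with
  | _ N ihN =>
  intro G _ _ hGN M
  induction M using Nat.strong_induction_on with
  | _ M ihM =>
  intro H hHM hmax
  by_cases htop : H = ⊤
  · exact ⟨0, htop⟩
  have hHG : Nat.card H < Nat.card G := by
    refine lt_of_le_of_ne (Subgroup.card_le_card_group H) ?_
    intro hEq
    exact htop (Subgroup.eq_top_of_card_eq H hEq)
  by_cases hC : centralizer (H : Set G) ≤ H
  · -- the centralizer is contained in H
    by_cases hnorm : H.Normal
    · exact ⟨1, cdChain_normal H hnorm⟩
    · have hex : ∃ g h0 : G, h0 ∈ H ∧ g * h0 * g⁻¹ ∉ H := by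
        by_contra hcon
        push_neg at hcon
        exact hnorm ⟨fun h hh g => hcon g h hh⟩
      obtain ⟨g, h0, hh0, hgh0⟩ := hex
      set e : G ≃* G := (MulAut.conj g : G ≃* G) with he
      set Hg := H.map e.toMonoidHom with hHgdef
      have hHgm : cdMeasure Hg = cdMeasure H := cdMeasure_map_equiv e H
      obtain ⟨hKm, hcardeq⟩ := sup_cd hmax rfl hHgm
      set K := H ⊔ Hg with hKdef
      have hHK : H ≤ K := le_sup_left
      have hconjval : e.toMonoidHom h0 = g * h0 * g⁻¹ := by
        simp [he, MulAut.conj_apply]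
      have hmemHg : g * h0 * g⁻¹ ∈ Hg := by
        rw [hHgdef, ← hconjval]
        exact Subgroup.mem_map_of_mem _ hh0
      have hneq : H ≠ K := by
        intro hEq
        exact hgh0 ((le_sup_right.trans_eq hEq.symm) hmemHg)
      have hKtop : K ≠ ⊤ := by
        intro hKt
        have hg : g⁻¹ ∈ K := by rw [hKt]; trivial
        obtain ⟨a, ha, b, hb, hab⟩ := exists_mul_of_sup_card hcardeq hg
        obtain ⟨b0, hb0, hb0e⟩ := Subgroup.mem_map.mp hb
        have hb0val : e.toMonoidHom b0 = g * b0 * g⁻¹ := by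
          simp [he, MulAut.conj_apply]
        have heq : a * (g * b0 * g⁻¹) = g⁻¹ := by
          rw [← hb0val, hb0e]
          exact hab
        have h2 : a * g * b0 = 1 := by
          calc a * g * b0 = (a * (g * b0 * g⁻¹)) * g := by group
            _ = g⁻¹ * g := by rw [heq]
            _ = 1 := by group
        have hgval : g = a⁻¹ * b0⁻¹ := by
          calc g = a⁻¹ * (a * g * b0) * b0⁻¹ := by group
            _ = a⁻¹ * 1 * b0⁻¹ := by rw [h2]
            _ = a⁻¹ * b0⁻¹ := by group
        have hginH : g ∈ H := by
          rw [hgval]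
          exact mul_mem (inv_mem ha) (inv_mem hb0)
        exact hgh0 (H.mul_mem (H.mul_mem hginH hh0) (inv_mem hginH))
      have hlt : H < K := lt_of_le_of_ne hHK hneq
      have hcardHK : Nat.card H < Nat.card ↥K := card_lt_of_lt hlt
      have hKleG : Nat.card ↥K ≤ Nat.card G := Subgroup.card_le_card_group K
      have hcardKG : Nat.card ↥K < Nat.card G := by
        refine lt_of_le_of_ne hKleG ?_
        intro hEq
        exact hKtop (Subgroup.eq_top_of_card_eq K hEq)
      obtain ⟨nK, hchainK⟩ := ihM (Nat.card G - Nat.card ↥K) (by omega) K (le_rfl)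
        (fun L => (hmax L).trans hKm.ge)
      have hmaxK := hmax_restrict hmax hHK (hC.trans hHK)
      obtain ⟨nH, hchainH⟩ := ihN (Nat.card ↥K) (by omega) ↥K le_rfl (Nat.card ↥K)
        (H.subgroupOf K) (Nat.sub_le _ _) hmaxK
      exact cdChain_transfer nH K H hHK hchainH ⟨nK, hchainK⟩
  · -- the centralizer is not contained in H
    set C := centralizer (H : Set G) with hCdef
    have hCm : cdMeasure C = cdMeasure H :=
      le_antisymm (hmax C) (cdMeasure_le_cdMeasure_centralizer H)
    obtain ⟨hKm, -⟩ := sup_cd hmax rfl hCm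
    set K := H ⊔ C with hKdef
    have hHK : H ≤ K := le_sup_left
    have hlt : H < K := lt_of_le_of_ne hHK (fun hEq => hC (le_sup_right.trans_eq hEq.symm))
    have hcardHK : Nat.card H < Nat.card ↥K := card_lt_of_lt hlt
    have hKleG : Nat.card ↥K ≤ Nat.card G := Subgroup.card_le_card_group K
    obtain ⟨nK, hchainK⟩ := ihM (Nat.card G - Nat.card ↥K) (by omega) K le_rfl
      (fun L => (hmax L).trans hKm.ge)
    refine ⟨nK + 1, K, hHK, ?_, hchainK⟩
    have hKnorm : K ≤ normalizer (H : Set G) :=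
      sup_le Subgroup.le_normalizer (centralizer_le_normalizer H)
    rw [Subgroup.normal_subgroupOf_iff hHK]
    intro h k hh hk
    exact (Subgroup.mem_normalizer_iff.mp (hKnorm hk) h).mp hh

end CDAux

theorem cd_max_subnormal
    (G : Type*) [Group G] [Finite G] (H : Subgroup G)
    (hmax : ∀ K : Subgroup G, cdMeasure K ≤ cdMeasure H) :
    IsSubnormal H := by
  obtain ⟨n, hc⟩ := CDAux.cd_main (Nat.card G) G le_rfl (Nat.card G) H (Nat.sub_le _ _) hmax
  exact CDAux.isSubnormal_of_cdChain hc
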